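/- The parameter-dependent semiflow possesses η₃-slow relaxations if and only if at least one of the following holds: (1) there exist a point k* ∈ K, a sequence kₙ → k*, a point y ∈ ω(k*), and δ > 0 such that dist(y, ω(kₙ)) ≥ δ for every n (ω(k)-bifurcations); (2) there exist x ∈ X and k ∈ K such that the (k,x)-motion is whole and x does not belong to the closure of ω(k). -/
import Mathlib


open Filter Topology Metric Set MeasureTheory
open scoped ENNReal

/-- A parameter-dependent semiflow on a metric space `X` with parameter space `K`:
a map `f : [0,∞) × X × K → X` (encoded with time in `ℝ`, with conditions only for
nonnegative times), continuous on `[0,∞) × X × K`, satisfying the semigroup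
identities, and injective in `x` for each fixed time and parameter. -/
structure PSemiflow (X K : Type*) [MetricSpace X] [MetricSpace K] where
  f : ℝ → X → K → X
  cont : ContinuousOn (fun p : ℝ × X × K => f p.1 p.2.1 p.2.2) {p : ℝ × X × K | 0 ≤ p.1}
  map_zero : ∀ x k, f 0 x k = x
  semigroup : ∀ t t' : ℝ, 0 ≤ t → 0 ≤ t' → ∀ x k, f t (f t' x k) k = f (t + t') x k
  inj : ∀ t : ℝ, 0 ≤ t → ∀ k, Function.Injective fun x => f t x k

namespace PSemiflow

variable {X K : Type*} [MetricSpace X] [MetricSpace K] (S : PSemiflow X K)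

/-- The ω-limit set `ω(x,k)`: all limits of `f(tₙ,x,k)` along sequences `tₙ → ∞`. -/
def omega (x : X) (k : K) : Set X :=
  {y | ∃ t : ℕ → ℝ, (∀ n, 0 ≤ t n) ∧ Tendsto t atTop atTop ∧
      Tendsto (fun n => S.f (t n) x k) atTop (𝓝 y)}

/-- The complete ω-limit set `ω(k) = ⋃ₓ ω(x,k)`. -/
def omegaK (k : K) : Set X := ⋃ x : X, S.omega x k

/-- The relaxation time `η₃(x,k,ε)`: time of the final entry of the motion into the
`ε`-neighbourhood of `ω(k)`. -/
noncomputable def eta3 (x : X) (k : K) (ε : ℝ) : ℝ :=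
  sInf {t : ℝ | 0 ≤ t ∧ ∀ t' > t, infDist (S.f t' x k) (S.omegaK k) < ε}

/-- The system possesses η₃-slow relaxations. -/
def SlowEta3 : Prop := ∃ ε > (0:ℝ), ∀ T > (0:ℝ), ∃ x k, S.eta3 x k ε > T

/-- The (k,x)-motion is whole: it extends to a full trajectory `φ : ℝ → X`. -/
def IsWholeMotion (x : X) (k : K) (φ : ℝ → X) : Prop :=
  φ 0 = x ∧ ∀ s t : ℝ, 0 ≤ t → S.f t (φ s) k = φ (s + t)

end PSemiflow

/-- The α-limit set of a whole motion `φ`: all limits of `φ(tₙ)` with `tₙ → -∞`. -/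
def alphaLimit {X : Type*} [MetricSpace X] (φ : ℝ → X) : Set X :=
  {y | ∃ t : ℕ → ℝ, Tendsto t atTop atBot ∧ Tendsto (fun n => φ (t n)) atTop (𝓝 y)}

namespace PSemiflow
variable {X K : Type*} [MetricSpace X] [MetricSpace K] (S : PSemiflow X K)

end PSemiflow



namespace PSemiflow
variable {X K : Type*} [MetricSpace X] [MetricSpace K] (S : PSemiflow X K)

lemma tendsto_f_seq {x : X} {k : K} {t : ℝ} (ht : 0 ≤ t)
    {u : ℕ → ℝ} {v : ℕ → X} {w : ℕ → K} (hu0 : ∀ n, 0 ≤ u n)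
    (hu : Tendsto u atTop (𝓝 t)) (hv : Tendsto v atTop (𝓝 x))
    (hw : Tendsto w atTop (𝓝 k)) :
    Tendsto (fun n => S.f (u n) (v n) (w n)) atTop (𝓝 (S.f t x k)) := by
  have hc := (S.cont (t, x, k) ht).tendsto
  have hseq : Tendsto (fun n => ((u n, v n, w n) : ℝ × X × K)) atTop
      (𝓝[{p : ℝ × X × K | 0 ≤ p.1}] (t, x, k)) := by
    rw [tendsto_nhdsWithin_iff]
    exact ⟨hu.prodMk_nhds (hv.prodMk_nhds hw), Eventually.of_forall fun n => hu0 n⟩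
  exact hc.comp hseq

lemma omega_nonempty [CompactSpace X] (x : X) (k : K) : (S.omega x k).Nonempty := by
  obtain ⟨y, φ, hφ, hy⟩ := CompactSpace.tendsto_subseq (fun n : ℕ => S.f n x k)
  exact ⟨y, fun n => (φ n : ℝ), fun n => Nat.cast_nonneg _,
    tendsto_natCast_atTop_atTop.comp hφ.tendsto_atTop, hy⟩

lemma entry_nonempty [CompactSpace X] (x : X) (k : K) {ε : ℝ} (hε : 0 < ε) :
    ∃ t : ℝ, 0 ≤ t ∧ ∀ t' > t, infDist (S.f t' x k) (S.omegaK k) < ε := by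
  by_contra h
  push_neg at h
  have h' : ∀ n : ℕ, ∃ t' > (n : ℝ), ε ≤ infDist (S.f t' x k) (S.omegaK k) := by
    intro n
    obtain ⟨t', ht', hf⟩ := h (n : ℝ) (Nat.cast_nonneg n)
    exact ⟨t', ht', hf⟩
  choose s hs hfar using h'
  obtain ⟨w, φ, hφ, hw⟩ := CompactSpace.tendsto_subseq (fun n => S.f (s n) x k)
  have hwmem : w ∈ S.omegaK k := by
    refine mem_iUnion.2 ⟨x, fun n => s (φ n), fun n => le_of_lt
      (lt_of_le_of_lt (Nat.cast_nonneg _) (hs (φ n))), ?_, hw⟩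
    apply tendsto_atTop_mono (fun n => (hs (φ n)).le)
    exact tendsto_natCast_atTop_atTop.comp hφ.tendsto_atTop
  have hlim : Tendsto (fun n => infDist (S.f (s (φ n)) x k) (S.omegaK k)) atTop (𝓝 0) := by
    have := ((continuous_infDist_pt (S.omegaK k)).tendsto w).comp hw
    rwa [infDist_zero_of_mem hwmem] at this
  obtain ⟨n, hn⟩ := (hlim.eventually (eventually_lt_nhds hε)).exists
  exact absurd (hfar (φ n)) (not_le.2 hn)

lemma eta3_lower [CompactSpace X] (x : X) (k : K) {ε τ : ℝ} (hε : 0 < ε)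
    (hτ : ε ≤ infDist (S.f τ x k) (S.omegaK k)) :
    τ ≤ S.eta3 x k ε := by
  obtain ⟨t0, ht0, h0⟩ := S.entry_nonempty x k hε
  refine le_csInf ⟨t0, ht0, h0⟩ ?_
  rintro b ⟨hb0, hb⟩
  by_contra hlt
  push_neg at hlt
  exact absurd (hb τ hlt) (not_lt.2 hτ)

lemma exists_far_of_eta3_gt (x : X) (k : K) {ε T : ℝ} (hT : 0 ≤ T)
    (h : T < S.eta3 x k ε) :
    ∃ t' > T, ε ≤ infDist (S.f t' x k) (S.omegaK k) := by
  by_contra hc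
  push_neg at hc
  have : S.eta3 x k ε ≤ T :=
    csInf_le ⟨0, fun t ht => ht.1⟩ ⟨hT, fun t' ht' => hc t' ht'⟩
  linarith

end PSemiflow

/-- Theorem 2.8: the system possesses η₃-slow relaxations iff (1) there are
`ω(k)`-bifurcations, or (2) there is a whole `(k,x)`-motion with
`x ∉ closure (ω(k))`. -/
theorem slowEta3_iff {X K : Type*} [MetricSpace X] [CompactSpace X]
    [MetricSpace K] [CompactSpace K] (S : PSemiflow X K) :
    S.SlowEta3 ↔
      ((∃ (kstar : K) (ks : ℕ → K) (y : X) (δ : ℝ), 0 < δ ∧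
          Tendsto ks atTop (𝓝 kstar) ∧
          y ∈ S.omegaK kstar ∧ ∀ n, δ ≤ infDist y (S.omegaK (ks n))) ∨
        (∃ (x : X) (k : K) (φ : ℝ → X), S.IsWholeMotion x k φ ∧
          x ∉ closure (S.omegaK k))) := by
  constructor
  · rintro ⟨ε, hε, hslow⟩
    have hch : ∀ n : ℕ, ∃ x k, ∃ t' > (n : ℝ), ε ≤ infDist (S.f t' x k) (S.omegaK k) := by
      intro n
      obtain ⟨x, k, hxk⟩ := hslow ((n : ℝ) + 1) (by positivity)
      exact ⟨x, k, S.exists_far_of_eta3_gt x k (Nat.cast_nonneg n) (by linarith)⟩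
    choose x k τ hτ hfar using hch
    have hτpos : ∀ n, (0 : ℝ) ≤ τ n := fun n =>
      le_of_lt (lt_of_le_of_lt (Nat.cast_nonneg n) (hτ n))
    obtain ⟨⟨z, kstar⟩, σ, hσ, hlim⟩ := CompactSpace.tendsto_subseq
      (fun n => ((fun m : ℕ => S.f (max (τ n - m) 0) (x n) (k n), k n) : (ℕ → X) × K))
    have hk : Tendsto (fun n => k (σ n)) atTop (𝓝 kstar) :=
      (continuous_snd.tendsto _).comp hlim
    have hz : ∀ m : ℕ, Tendsto
        (fun n => S.f (max (τ (σ n) - m) 0) (x (σ n)) (k (σ n))) atTop (𝓝 (z m)) := by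
      intro m
      have h1 := (continuous_fst.tendsto _).comp hlim
      exact (tendsto_pi_nhds.1 h1) m
    have hτσ : ∀ m n : ℕ, m ≤ n → (m : ℝ) ≤ τ (σ n) := by
      intro m n hmn
      have h1 : (n : ℝ) ≤ (σ n : ℝ) := by exact_mod_cast hσ.le_apply
      have h2 : (m : ℝ) ≤ (n : ℝ) := by exact_mod_cast hmn
      linarith [hτ (σ n)]
    have hstep : ∀ m : ℕ, S.f 1 (z (m + 1)) kstar = z m := by
      intro m
      have hA : Tendsto (fun n =>
          S.f 1 (S.f (max (τ (σ n) - ((m + 1 : ℕ) : ℝ)) 0) (x (σ n)) (k (σ n))) (k (σ n)))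
          atTop (𝓝 (S.f 1 (z (m + 1)) kstar)) :=
        S.tendsto_f_seq zero_le_one (fun _ => zero_le_one) tendsto_const_nhds (hz (m + 1)) hk
      have hEq : ∀ᶠ n in atTop,
          S.f 1 (S.f (max (τ (σ n) - ((m + 1 : ℕ) : ℝ)) 0) (x (σ n)) (k (σ n))) (k (σ n))
            = S.f (max (τ (σ n) - m) 0) (x (σ n)) (k (σ n)) := by
        filter_upwards [eventually_ge_atTop (m + 1)] with n hn
        have h1 : ((m + 1 : ℕ) : ℝ) ≤ τ (σ n) := hτσ (m + 1) n hn
        have h1' : (m : ℝ) + 1 ≤ τ (σ n) := by push_cast at h1; linarith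
        have hm1 : 0 ≤ τ (σ n) - ((m + 1 : ℕ) : ℝ) := by linarith [h1]
        have hm0 : 0 ≤ τ (σ n) - (m : ℝ) := by linarith
        rw [sub_nonneg] at hm1 hm0
        rw [max_eq_left (sub_nonneg.2 hm1), max_eq_left (sub_nonneg.2 hm0),
          S.semigroup 1 _ zero_le_one (sub_nonneg.2 hm1)]
        congr 1
        push_cast
        ring
      exact tendsto_nhds_unique (Filter.Tendsto.congr' hEq hA) (hz m)
    have hchain : ∀ m p : ℕ, S.f p (z (m + p)) kstar = z m := by
      intro m p
      induction p with
      | zero => simpa using S.map_zero (z m) kstar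
      | succ p ih =>
        have hsg := S.semigroup (p : ℝ) 1 (Nat.cast_nonneg p) zero_le_one (z (m + p + 1)) kstar
        rw [hstep (m + p), ih] at hsg
        rw [show ((p + 1 : ℕ) : ℝ) = (p : ℝ) + 1 by push_cast; ring]
        exact hsg.symm
    have hwd2 : ∀ (t : ℝ) (m n : ℕ), m ≤ n → 0 ≤ t + m →
        S.f (t + m) (z m) kstar = S.f (t + n) (z n) kstar := by
      intro t m n hmn h0
      have hc := hchain m (n - m)
      rw [Nat.add_sub_cancel' hmn] at hc
      rw [← hc, S.semigroup (t + m) ((n - m : ℕ) : ℝ) h0 (Nat.cast_nonneg _)]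
      congr 1
      rw [Nat.cast_sub hmn]
      ring
    have hwd : ∀ (t : ℝ) (m n : ℕ), 0 ≤ t + m → 0 ≤ t + n →
        S.f (t + m) (z m) kstar = S.f (t + n) (z n) kstar := by
      intro t m n h1 h2
      rcases le_total m n with h | h
      · exact hwd2 t m n h h1
      · exact (hwd2 t n m h h2).symm
    set N : ℝ → ℕ := fun t => ⌈max 0 (-t)⌉₊ with hN
    have hN0 : ∀ t : ℝ, 0 ≤ t + N t := by
      intro t
      have := Nat.le_ceil (max 0 (-t))
      have h2 : -t ≤ max 0 (-t) := le_max_right _ _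
      simp only [hN]
      linarith
    set φ : ℝ → X := fun t => S.f (t + N t) (z (N t)) kstar with hφ
    have hφ0 : φ 0 = z 0 := by
      have : N 0 = 0 := by simp [hN]
      simp [hφ, this, S.map_zero]
    have hφflow : ∀ s t : ℝ, 0 ≤ t → S.f t (φ s) kstar = φ (s + t) := by
      intro s t ht
      simp only [hφ]
      rw [S.semigroup t (s + N s) ht (hN0 s),
        show t + (s + (N s : ℝ)) = (s + t) + (N s : ℝ) by ring]
      exact hwd (s + t) (N s) (N (s + t)) (by linarith [hN0 s]) (hN0 (s + t))
    by_cases hy : z 0 ∈ closure (S.omegaK kstar)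
    · left
      obtain ⟨y, hyΩ, hyd⟩ := Metric.mem_closure_iff.1 hy (ε / 4) (by linarith)
      have hz0 : Tendsto (fun n => S.f (τ (σ n)) (x (σ n)) (k (σ n))) atTop (𝓝 (z 0)) := by
        refine (hz 0).congr fun n => ?_
        rw [Nat.cast_zero, sub_zero, max_eq_left (hτpos (σ n))]
      obtain ⟨N0, hN0'⟩ := Metric.tendsto_atTop.1 hz0 (ε / 4) (by linarith)
      refine ⟨kstar, fun n => k (σ (n + N0)), y, ε / 2, by linarith,
        hk.comp (tendsto_add_atTop_nat N0), hyΩ, fun n => ?_⟩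
      have h1 := hfar (σ (n + N0))
      have h2 := hN0' (n + N0) (Nat.le_add_left N0 n)
      have h3 : dist (S.f (τ (σ (n + N0))) (x (σ (n + N0))) (k (σ (n + N0)))) y < ε / 2 := by
        calc dist (S.f (τ (σ (n + N0))) (x (σ (n + N0))) (k (σ (n + N0)))) y
            ≤ dist (S.f (τ (σ (n + N0))) (x (σ (n + N0))) (k (σ (n + N0)))) (z 0) + dist (z 0) y :=
              dist_triangle _ _ _
          _ < ε / 4 + ε / 4 := add_lt_add h2 hyd
          _ = ε / 2 := by ring
      have h4 := infDist_le_infDist_add_dist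
        (x := S.f (τ (σ (n + N0))) (x (σ (n + N0))) (k (σ (n + N0)))) (y := y)
        (s := S.omegaK (k (σ (n + N0))))
      linarith
    · right
      exact ⟨z 0, kstar, φ, ⟨hφ0, hφflow⟩, hy⟩
  · rintro (⟨kstar, ks, y, δ, hδ, hks, hyΩ, hbif⟩ | ⟨x, k, φ, ⟨hφ0, hφf⟩, hx⟩)
    · obtain ⟨xs, hxs⟩ := mem_iUnion.1 hyΩ
      obtain ⟨t, ht0, htop, hconv⟩ := hxs
      refine ⟨δ / 3, by linarith, fun T hT => ?_⟩
      have h1 : ∀ᶠ m in atTop, T < t m := htop.eventually (eventually_gt_atTop T)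
      have h2 : ∀ᶠ m in atTop, dist (S.f (t m) xs kstar) y < δ / 3 :=
        Metric.tendsto_nhds.1 hconv (δ / 3) (by linarith)
      obtain ⟨m, hm1, hm2⟩ := (h1.and h2).exists
      have hcont : Tendsto (fun n => S.f (t m) xs (ks n)) atTop (𝓝 (S.f (t m) xs kstar)) :=
        S.tendsto_f_seq (ht0 m) (fun _ => ht0 m) tendsto_const_nhds tendsto_const_nhds hks
      obtain ⟨n, hn⟩ := (Metric.tendsto_nhds.1 hcont (δ / 3) (by linarith)).exists
      have hd : dist y (S.f (t m) xs (ks n)) < 2 * δ / 3 := by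
        calc dist y (S.f (t m) xs (ks n))
            ≤ dist y (S.f (t m) xs kstar) + dist (S.f (t m) xs kstar) (S.f (t m) xs (ks n)) :=
              dist_triangle _ _ _
          _ < δ / 3 + δ / 3 := add_lt_add (by rw [dist_comm]; exact hm2) (by rw [dist_comm]; exact hn)
          _ = 2 * δ / 3 := by ring
      have hfar' : δ / 3 ≤ infDist (S.f (t m) xs (ks n)) (S.omegaK (ks n)) := by
        have h5 := infDist_le_infDist_add_dist (x := y) (y := S.f (t m) xs (ks n))
          (s := S.omegaK (ks n))
        have h6 := hbif n
        linarith
      exact ⟨xs, ks n, lt_of_lt_of_le hm1 (S.eta3_lower xs (ks n) (by linarith) hfar')⟩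
    · have hne : (S.omegaK k).Nonempty := by
        obtain ⟨w, hw⟩ := S.omega_nonempty x k
        exact ⟨w, mem_iUnion.2 ⟨x, hw⟩⟩
      have hpos : 0 < infDist x (S.omegaK k) := by
        rcases eq_or_lt_of_le (infDist_nonneg (s := S.omegaK k) (x := x)) with h | h
        · exact absurd ((mem_closure_iff_infDist_zero hne).2 h.symm) hx
        · exact h
      refine ⟨infDist x (S.omegaK k), hpos, fun T hT => ?_⟩
      refine ⟨φ (-(T + 1)), k, ?_⟩
      have he : S.f (T + 1) (φ (-(T + 1))) k = x := by
        rw [hφf (-(T + 1)) (T + 1) (by linarith),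
          show -(T + 1) + (T + 1) = (0 : ℝ) by ring, hφ0]
      have hlow := S.eta3_lower (φ (-(T + 1))) k hpos (le_of_eq (by rw [he]))
      linarith
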